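/- Let Ω > 0, g ∈ PW_Ω, T > 0 and N ∈ ℕ. Define the samples γ[k] = g(kT) for k ∈ ℤ. Then the N-th forward differences satisfy sup_{k ∈ ℤ} |(Δ^N γ)[k]| ≤ (TΩe)^N · sup_{t ∈ ℝ} |g(t)|, where e is Euler's number. -/

import Mathlib

open MeasureTheory Real

/-- Membership in the Paley–Wiener space `PW_Ω`: `g(t) = ∫_{−Ω}^{Ω} φ(ω) e^{iωt} dω`
for some square-integrable `φ : [−Ω,Ω] → ℂ`. -/
def IsPW (Ω : ℝ) (g : ℝ → ℝ) : Prop :=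
  ∃ φ : ℝ → ℂ, MemLp φ 2 (volume.restrict (Set.Icc (-Ω) Ω)) ∧
    ∀ t : ℝ, (g t : ℂ) =
      ∫ ω in Set.Icc (-Ω) Ω, φ ω * Complex.exp (Complex.I * (ω : ℂ) * (t : ℂ))

/-- The forward difference operator `(Δa)[k] = a[k+1] − a[k]` on sequences. -/
def fdiff (a : ℤ → ℝ) : ℤ → ℝ := fun k => a (k + 1) - a k

noncomputable section PWAux

open Complex Set Function

/-- Difference operator with step `T` on complex functions. -/
def cdiff (T : ℝ) (F : ℂ → ℂ) : ℂ → ℂ := fun z => F (z + T) - F z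

lemma cdiff_differentiable {T : ℝ} {F : ℂ → ℂ} (hF : Differentiable ℂ F) :
    Differentiable ℂ (cdiff T F) :=
  (hF.comp (differentiable_id.add_const _)).sub hF

lemma entire_iteratedDeriv {F : ℂ → ℂ} (hF : Differentiable ℂ F) (n : ℕ) :
    Differentiable ℂ (iteratedDeriv n F) := by
  refine ContDiff.differentiable_iteratedDeriv n (hF.contDiff (n := (⊤ : WithTop ℕ∞))) ?_
  exact_mod_cast WithTop.coe_lt_top _

lemma sample_eq (T : ℝ) : ∀ (n : ℕ) (a : ℤ → ℝ) (F : ℂ → ℂ),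
    (∀ m : ℤ, (a m : ℂ) = F (((m : ℝ) * T : ℝ) : ℂ)) → ∀ k : ℤ,
    ((fdiff^[n] a k : ℝ) : ℂ) = (cdiff T)^[n] F (((k : ℝ) * T : ℝ) : ℂ) := by
  intro n
  induction n with
  | zero => intro a F h k; simpa using h k
  | succ n ih =>
    intro a F h k
    rw [Function.iterate_succ_apply, Function.iterate_succ_apply]
    refine ih (fdiff a) (cdiff T F) (fun m => ?_) k
    have h1 := h (m + 1)
    have h0 := h m
    have harg : (((((m + 1 : ℤ)) : ℝ) * T : ℝ) : ℂ)
        = ((((m : ℝ) * T : ℝ) : ℂ) + (T : ℂ)) := by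
      push_cast; ring
    simp only [fdiff, cdiff]
    push_cast
    rw [h1, h0, harg]
    norm_cast

lemma bound_cdiff {T : ℝ} (hT : 0 ≤ T) : ∀ (n : ℕ) (F : ℂ → ℂ), Differentiable ℂ F →
    ∀ D : ℝ, (∀ t : ℝ, ‖iteratedDeriv n F t‖ ≤ D) →
    ∀ t : ℝ, ‖(cdiff T)^[n] F t‖ ≤ T ^ n * D := by
  intro n
  induction n with
  | zero => intro F hF D hD t; simpa using hD t
  | succ n ih =>
    intro F hF D hD t
    rw [Function.iterate_succ_apply]
    have hD' : ∀ s : ℝ, ‖iteratedDeriv n (cdiff T F) s‖ ≤ T * D := by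
      intro s
      have h1 : Differentiable ℂ (fun z : ℂ => F (z + (T : ℂ))) :=
        hF.comp (differentiable_id.add_const _)
      have hsub : iteratedDeriv n (cdiff T F) (s : ℂ)
          = iteratedDeriv n (fun z : ℂ => F (z + (T : ℂ))) (s : ℂ)
            - iteratedDeriv n F (s : ℂ) := by
      -- cdiff T F = (fun z => F (z + T)) - F as pi functions
        have : cdiff T F = (fun z : ℂ => F (z + (T : ℂ))) - F := rfl
        rw [this, ← iteratedDerivWithin_univ, ← iteratedDerivWithin_univ,
          ← iteratedDerivWithin_univ]
        exact iteratedDerivWithin_sub (Set.mem_univ _) uniqueDiffOn_univ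
          (h1.contDiff.contDiffWithinAt) (hF.contDiff.contDiffWithinAt)
      rw [hsub, iteratedDeriv_comp_add_const]
      -- MVT bound for u := iteratedDeriv n F along the real segment
      have hu : Differentiable ℂ (iteratedDeriv n F) := entire_iteratedDeriv hF n
      have key : ‖(fun x : ℝ => iteratedDeriv n F (x : ℂ)) (s + T)
          - (fun x : ℝ => iteratedDeriv n F (x : ℂ)) s‖ ≤ D * ‖(s + T) - s‖ := by
        refine Convex.norm_image_sub_le_of_norm_hasDerivWithin_le
          (f := fun x : ℝ => iteratedDeriv n F (x : ℂ))
          (f' := fun x : ℝ => iteratedDeriv (n + 1) F (x : ℂ))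
          (fun x _ => ?_) (fun x _ => hD x) convex_univ (Set.mem_univ s)
          (Set.mem_univ (s + T))
        have h3 : HasDerivAt (iteratedDeriv n F) (iteratedDeriv (n + 1) F (x : ℂ)) (x : ℂ) := by
          rw [iteratedDeriv_succ]
          exact (hu (x : ℂ)).hasDerivAt
        exact (h3.comp_ofReal).hasDerivWithinAt
      have harg : ((s : ℂ) + (T : ℂ)) = (((s + T : ℝ)) : ℂ) := by push_cast; ring
      simp only []
      rw [harg]
      calc ‖iteratedDeriv n F ((s + T : ℝ) : ℂ) - iteratedDeriv n F (s : ℂ)‖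
          ≤ D * ‖(s + T) - s‖ := key
        _ = D * T := by rw [add_sub_cancel_left, Real.norm_eq_abs, _root_.abs_of_nonneg hT]
        _ = T * D := mul_comm _ _
    have := ih (cdiff T F) (cdiff_differentiable hF) (T * D) hD' t
    calc ‖(cdiff T)^[n] (cdiff T F) (t : ℂ)‖ ≤ T ^ n * (T * D) := this
      _ = T ^ (n + 1) * D := by ring

lemma cauchy_bound {G : ℂ → ℂ} (hG : Differentiable ℂ G) (n : ℕ) (c : ℂ) {r : ℝ} (hr : 0 < r)
    {C : ℝ} (hC : ∀ θ : ℝ, ‖G (circleMap c r θ)‖ ≤ C) :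
    ‖iteratedDeriv n G c‖ ≤ (n.factorial : ℝ) * C / r ^ n := by
  lift r to NNReal using hr.le with r' hr'
  have hr0 : (0 : NNReal) < r' := by exact_mod_cast hr
  have hp : HasFPowerSeriesOnBall G (cauchyPowerSeries G c r') c ⊤ :=
    hG.hasFPowerSeriesOnBall c hr0
  have hC0 : 0 ≤ C := (norm_nonneg _).trans (hC 0)
  -- identify the iterated derivative with the Taylor coefficient
  have hcoef : (n.factorial : ℝ) • (cauchyPowerSeries G c r' n fun _ => (1 : ℂ))
      = iteratedDeriv n G c := by
    rw [iteratedDeriv_eq_iteratedFDeriv, ← hp.factorial_smul (1 : ℂ) n]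
    simp [nsmul_eq_mul, Complex.real_smul]
  have hnorm : ‖iteratedDeriv n G c‖
      ≤ (n.factorial : ℝ) * ‖cauchyPowerSeries G c r' n‖ := by
    rw [← hcoef, norm_smul]
    simp only [Real.norm_natCast]
    gcongr
    calc ‖cauchyPowerSeries G c r' n fun _ => (1 : ℂ)‖
        ≤ ‖cauchyPowerSeries G c r' n‖ * ∏ _i : Fin n, ‖(1 : ℂ)‖ :=
          (cauchyPowerSeries G c r' n).le_opNorm _
      _ = ‖cauchyPowerSeries G c r' n‖ := by simp
  have hps : ‖cauchyPowerSeries G c r' n‖ ≤ C / (r' : ℝ) ^ n := by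
    have h1 := norm_cauchyPowerSeries_le G c r' n
    have h2 : (∫ θ : ℝ in (0)..2 * π, ‖G (circleMap c r' θ)‖) ≤ 2 * π * C := by
      calc (∫ θ : ℝ in (0)..2 * π, ‖G (circleMap c r' θ)‖)
          ≤ ∫ _θ : ℝ in (0)..2 * π, C := by
            refine intervalIntegral.integral_mono_on Real.two_pi_pos.le ?_
              (intervalIntegrable_const) (fun θ _ => hC θ)
            exact ((hG.continuous.comp (continuous_circleMap _ _)).norm).intervalIntegrable _ _
        _ = 2 * π * C := by simp [mul_comm]
      -- done
    calc ‖cauchyPowerSeries G c r' n‖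
        ≤ ((2 * π)⁻¹ * ∫ θ : ℝ in (0)..2 * π, ‖G (circleMap c r' θ)‖) * |(r' : ℝ)|⁻¹ ^ n := h1
      _ ≤ ((2 * π)⁻¹ * (2 * π * C)) * |(r' : ℝ)|⁻¹ ^ n := by gcongr
      _ = C / (r' : ℝ) ^ n := by
          rw [inv_mul_cancel_left₀ Real.two_pi_pos.ne', _root_.abs_of_nonneg hr.le,
            div_eq_mul_inv, inv_pow]
  calc ‖iteratedDeriv n G c‖ ≤ (n.factorial : ℝ) * ‖cauchyPowerSeries G c r' n‖ := hnorm
    _ ≤ (n.factorial : ℝ) * (C / (r' : ℝ) ^ n) := by gcongr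
    _ = (n.factorial : ℝ) * C / (r' : ℝ) ^ n := by ring

lemma strip_bound_upper {Ω : ℝ} (hΩ : 0 < Ω) {G : ℂ → ℂ} (hG : Differentiable ℂ G)
    {Mφ M : ℝ} (hMφ0 : 0 ≤ Mφ)
    (hb : ∀ z : ℂ, ‖G z‖ ≤ Mφ * Real.exp (Ω * |z.im|))
    (hr : ∀ t : ℝ, ‖G t‖ ≤ M) {z : ℂ} (hz : 0 < z.im) :
    ‖G z‖ ≤ M * Real.exp (Ω * |z.im|) := by
  have hM0 : 0 ≤ M := (norm_nonneg _).trans (hr 0)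
  set x := z.re with hx
  set y := z.im with hy
  have key : ∀ ε : ℝ, ε ∈ Set.Ioo (0 : ℝ) 1 →
      Real.exp (-(Ω * y)) * ‖G z‖ ≤ M ^ (1 - ε) * Mφ ^ ε := by
    intro ε hε
    set Y := y / ε with hYdef
    have hY0 : 0 < Y := div_pos hz hε.1
    set f : ℂ → ℂ := fun w =>
      Complex.exp (Complex.I * Ω * ((x : ℂ) + Complex.I * Y * w)) *
        G ((x : ℂ) + Complex.I * Y * w) with hf
    have hfd : Differentiable ℂ f := by
      apply Differentiable.mul
      · apply Complex.differentiable_exp.comp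
        fun_prop
      · exact hG.comp (by fun_prop)
    have hnormf : ∀ w : ℂ, ‖f w‖ =
        Real.exp (-(Ω * (Y * w.re))) * ‖G ((x : ℂ) + Complex.I * Y * w)‖ := by
      intro w
      rw [hf]
      simp only [norm_mul, Complex.norm_exp]
      congr 2
      simp [Complex.mul_re, Complex.mul_im]
    have him : ∀ w : ℂ, ((x : ℂ) + Complex.I * Y * w).im = Y * w.re := by
      intro w
      simp [Complex.mul_im]
    -- bound on the whole closed strip
    have hfb : ∀ w ∈ Complex.HadamardThreeLines.verticalClosedStrip 0 1, ‖f w‖ ≤ Mφ := by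
      intro w hw
      have hw0 : 0 ≤ w.re := hw.1
      rw [hnormf]
      calc Real.exp (-(Ω * (Y * w.re))) * ‖G ((x : ℂ) + Complex.I * Y * w)‖
          ≤ Real.exp (-(Ω * (Y * w.re))) *
            (Mφ * Real.exp (Ω * |((x : ℂ) + Complex.I * Y * w).im|)) := by
            exact mul_le_mul_of_nonneg_left (hb _) (Real.exp_nonneg _)
        _ = Mφ := by
            rw [him, _root_.abs_of_nonneg (by positivity : (0:ℝ) ≤ Y * w.re)]
            rw [mul_comm, mul_assoc, ← Real.exp_add]
            simp
    -- boundary bounds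
    have hbd0 : ∀ w : ℂ, w ∈ Complex.re ⁻¹' {0} → ‖f w‖ ≤ M := by
      intro w hw
      have hw0 : w.re = 0 := hw
      have hreal : ((x : ℂ) + Complex.I * Y * w) = ((x - Y * w.im : ℝ) : ℂ) := by
        apply Complex.ext
        · simp [Complex.mul_re, hw0]
          ring
        · simp [Complex.mul_im, hw0]
      rw [hnormf, hw0]
      simp only [mul_zero, neg_zero, Real.exp_zero, one_mul]
      rw [hreal]
      exact hr _
    have hbd1 : ∀ w : ℂ, w ∈ Complex.re ⁻¹' {1} → ‖f w‖ ≤ Mφ := by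
      intro w hw
      have hw1 : w.re = 1 := hw
      exact hfb w (by simp [Complex.HadamardThreeLines.verticalClosedStrip, hw1])
    -- apply Hadamard three lines
    have happ := Complex.HadamardThreeLines.norm_le_interp_of_mem_verticalClosedStrip' (f := f) zero_lt_one
      (z := (ε : ℂ))
      (by simp [Complex.HadamardThreeLines.verticalClosedStrip]
          exact ⟨hε.1.le, hε.2.le⟩)
      hfd.diffContOnCl
      ⟨Mφ, by rintro v ⟨w, hw, rfl⟩; exact hfb w hw⟩
      hbd0 hbd1
    have hεre : ((ε : ℂ)).re = ε := by simp
    rw [hεre] at happ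
    -- compute f ε
    have hptarg : ((x : ℂ) + Complex.I * Y * (ε : ℂ)) = z := by
      have hYε : Y * ε = y := by
        rw [hYdef]; exact div_mul_cancel₀ y (ne_of_gt hε.1)
      apply Complex.ext
      · simp [Complex.mul_re]; exact hx
      · simp [Complex.mul_im, hYε]; exact hy
    have hfε : ‖f (ε : ℂ)‖ = Real.exp (-(Ω * y)) * ‖G z‖ := by
      rw [hnormf]
      have h5 : Y * ((ε : ℂ)).re = y := by
        rw [Complex.ofReal_re, hYdef]
        exact div_mul_cancel₀ y (ne_of_gt hε.1)
      rw [h5, hptarg]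
    rw [← hfε]
    simpa only [sub_zero, div_one] using happ
  -- now take the limit ε → 0⁺
  have habs : |z.im| = y := abs_of_pos hz
  rcases eq_or_lt_of_le hMφ0 with hMφ | hMφ
  · -- Mφ = 0 : G is identically 0
    have h0 : ‖G z‖ ≤ 0 := by
      have := hb z
      rw [← hMφ] at this
      simpa using this
    calc ‖G z‖ ≤ 0 := h0
      _ ≤ M * Real.exp (Ω * |z.im|) := by positivity
  rcases eq_or_lt_of_le hM0 with hM | hM
  · -- M = 0
    have h2 := key (1/2) (by norm_num)
    rw [← hM] at h2
    rw [Real.zero_rpow (by norm_num)] at h2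
    have h0 : ‖G z‖ ≤ 0 := by
      nlinarith [Real.exp_pos (-(Ω * y)), norm_nonneg (G z),
        Real.rpow_nonneg hMφ0 (1/2 : ℝ)]
    calc ‖G z‖ ≤ 0 := h0
      _ ≤ M * Real.exp (Ω * |z.im|) := by positivity
  -- main case : 0 < M, 0 < Mφ
  have tends : Filter.Tendsto (fun ε : ℝ => M ^ (1 - ε) * Mφ ^ ε)
      (nhdsWithin 0 (Set.Ioi 0)) (nhds M) := by
    have hcont : Continuous fun ε : ℝ => M ^ (1 - ε) * Mφ ^ ε := by
      simp_rw [Real.rpow_def_of_pos hM, Real.rpow_def_of_pos hMφ]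
      fun_prop
    have := hcont.tendsto 0
    simp only [sub_zero, Real.rpow_one, Real.rpow_zero, mul_one] at this
    exact this.mono_left nhdsWithin_le_nhds
  have hev : ∀ᶠ ε in nhdsWithin (0:ℝ) (Set.Ioi 0),
      Real.exp (-(Ω * y)) * ‖G z‖ ≤ M ^ (1 - ε) * Mφ ^ ε := by
    filter_upwards [Ioo_mem_nhdsGT_of_mem (by constructor <;> norm_num :
      (0:ℝ) ∈ Set.Ico (0:ℝ) 1)] with ε hε
    exact key ε hε
  have hlim : Real.exp (-(Ω * y)) * ‖G z‖ ≤ M := ge_of_tendsto tends hev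
  have h3 := mul_le_mul_of_nonneg_left hlim (Real.exp_nonneg (Ω * y))
  rw [← mul_assoc, ← Real.exp_add, add_neg_cancel, Real.exp_zero, one_mul] at h3
  rw [habs]
  linarith [h3]

lemma strip_bound {Ω : ℝ} (hΩ : 0 < Ω) {G : ℂ → ℂ} (hG : Differentiable ℂ G)
    {Mφ M : ℝ} (hMφ0 : 0 ≤ Mφ)
    (hb : ∀ z : ℂ, ‖G z‖ ≤ Mφ * Real.exp (Ω * |z.im|))
    (hr : ∀ t : ℝ, ‖G t‖ ≤ M) (z : ℂ) :
    ‖G z‖ ≤ M * Real.exp (Ω * |z.im|) := by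
  rcases lt_trichotomy z.im 0 with hlt | heq | hgt
  · -- reflect: apply the upper half plane case to w ↦ G (-w)
    have hG' : Differentiable ℂ (fun w => G (-w)) := hG.comp differentiable_neg
    have hb' : ∀ w : ℂ, ‖G (-w)‖ ≤ Mφ * Real.exp (Ω * |w.im|) := by
      intro w
      have := hb (-w)
      simpa using this
    have hr' : ∀ t : ℝ, ‖G (-(t : ℂ))‖ ≤ M := by
      intro t
      have : (-(t : ℂ)) = ((-t : ℝ) : ℂ) := by push_cast; ring
      rw [this]
      exact hr (-t)
    have hz' : 0 < (-z).im := by simp; linarith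
    have := strip_bound_upper hΩ hG' hMφ0 hb' hr' hz'
    simpa using this
  · -- real axis
    have hM0 : 0 ≤ M := (norm_nonneg _).trans (hr 0)
    have hzre : z = ((z.re : ℝ) : ℂ) := by
      apply Complex.ext <;> simp [heq]
    rw [heq]
    simp only [abs_zero, mul_zero, Real.exp_zero, mul_one]
    rw [hzre]
    exact hr z.re
  · exact strip_bound_upper hΩ hG hMφ0 hb hr hgt

lemma G_entire (Ω : ℝ) (hΩ0 : 0 ≤ Ω) (φ : ℝ → ℂ) (hφ : IntegrableOn φ (Set.Icc (-Ω) Ω)) :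
    Differentiable ℂ (fun z => ∫ ω in Set.Icc (-Ω) Ω,
      φ ω * Complex.exp (Complex.I * (ω : ℂ) * z)) := by
  set μ := volume.restrict (Set.Icc (-Ω) Ω) with hμ
  intro z₀
  have hmem : ∀ᵐ ω ∂μ, ω ∈ Set.Icc (-Ω) Ω :=
    ae_restrict_mem measurableSet_Icc
  have hmeas : ∀ z : ℂ, AEStronglyMeasurable
      (fun ω : ℝ => φ ω * Complex.exp (Complex.I * (ω : ℂ) * z)) μ := by
    intro z
    exact hφ.aestronglyMeasurable.mul
      ((Complex.continuous_exp.comp (by fun_prop)).aestronglyMeasurable)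
  have key := hasDerivAt_integral_of_dominated_loc_of_deriv_le (μ := μ)
    (F := fun (z : ℂ) (ω : ℝ) => φ ω * Complex.exp (Complex.I * (ω : ℂ) * z))
    (F' := fun (z : ℂ) (ω : ℝ) =>
      φ ω * (Complex.exp (Complex.I * (ω : ℂ) * z) * (Complex.I * (ω : ℂ))))
    (x₀ := z₀) (bound := fun ω : ℝ => ‖φ ω‖ * (Ω * Real.exp (Ω * (|z₀.im| + 1))))
    (Metric.ball_mem_nhds z₀ one_pos) (Filter.Eventually.of_forall hmeas) ?_ ?_ ?_ ?_ ?_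
  · exact key.2.differentiableAt
  · -- integrability of F z₀
    refine (hφ.norm.mul_const (Real.exp (Ω * |z₀.im|))).mono' (hmeas z₀) ?_
    filter_upwards [hmem] with ω hω
    simp only [norm_mul, Complex.norm_exp]
    gcongr ‖φ ω‖ * ?_
    have : (Complex.I * (ω : ℂ) * z₀).re = -(ω * z₀.im) := by
      simp [Complex.mul_re]
    rw [this]
    apply Real.exp_le_exp.2
    calc -(ω * z₀.im) ≤ |ω * z₀.im| := neg_le_abs _
      _ = |ω| * |z₀.im| := abs_mul _ _
      _ ≤ Ω * |z₀.im| := by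
          apply mul_le_mul_of_nonneg_right _ (abs_nonneg _)
          exact abs_le.2 ⟨hω.1, hω.2⟩
  · -- measurability of F' z₀
    exact (hφ.aestronglyMeasurable.mul
      (((Complex.continuous_exp.comp (by fun_prop)).mul (by fun_prop)).aestronglyMeasurable))
  · -- bound
    filter_upwards [hmem] with ω hω z hz
    have hωΩ : |ω| ≤ Ω := abs_le.2 ⟨hω.1, hω.2⟩
    simp only [norm_mul, Complex.norm_exp]
    have him : |z.im| ≤ |z₀.im| + 1 := by
      have h1 : |z.im - z₀.im| ≤ ‖z - z₀‖ := by
        simpa using Complex.abs_im_le_norm (z - z₀)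
      have h2 : ‖z - z₀‖ < 1 := by simpa [Metric.mem_ball, dist_eq_norm] using hz
      have h3 : |z.im| - |z₀.im| ≤ |z.im - z₀.im| := abs_sub_abs_le_abs_sub _ _
      linarith
    have hre : (Complex.I * (ω : ℂ) * z).re = -(ω * z.im) := by simp [Complex.mul_re]
    rw [hre]
    have hb : Real.exp (-(ω * z.im)) ≤ Real.exp (Ω * (|z₀.im| + 1)) := by
      apply Real.exp_le_exp.2
      calc -(ω * z.im) ≤ |ω * z.im| := neg_le_abs _
        _ = |ω| * |z.im| := abs_mul _ _
        _ ≤ Ω * (|z₀.im| + 1) := mul_le_mul hωΩ him (abs_nonneg _) hΩ0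
    simp only [Complex.norm_I, one_mul, Complex.norm_real, Real.norm_eq_abs]
    apply mul_le_mul_of_nonneg_left ?_ (norm_nonneg _)
    rw [mul_comm]
    exact mul_le_mul hωΩ hb (Real.exp_nonneg _) hΩ0
  · -- integrability of the bound
    exact hφ.norm.mul_const _
  · -- differentiability in z
    filter_upwards [] with ω z _
    simpa using (((hasDerivAt_id z).const_mul (Complex.I * (ω : ℂ))).cexp).const_mul (φ ω)

end PWAux

theorem stmt11 (Ω T : ℝ) (hΩ : 0 < Ω) (hT : 0 < T) (N : ℕ)
    (g : ℝ → ℝ) (hg : IsPW Ω g) :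
    (⨆ k : ℤ, |fdiff^[N] (fun m : ℤ => g (m * T)) k|) ≤
      (T * Ω * Real.exp 1) ^ N * ⨆ t : ℝ, |g t| := by
  obtain ⟨φ, hφ2, hrep⟩ := hg
  haveI : IsFiniteMeasure (volume.restrict (Set.Icc (-Ω) Ω)) :=
    ⟨by rw [Measure.restrict_apply_univ]; exact measure_Icc_lt_top⟩
  have hφ1 : IntegrableOn φ (Set.Icc (-Ω) Ω) volume :=
    hφ2.integrable (by norm_num)
  set G : ℂ → ℂ := fun z => ∫ ω in Set.Icc (-Ω) Ω,
    φ ω * Complex.exp (Complex.I * (ω : ℂ) * z) with hGdef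
  have hGdiff : Differentiable ℂ G := G_entire Ω hΩ.le φ hφ1
  have hGrep : ∀ t : ℝ, (g t : ℂ) = G t := fun t => hrep t
  set Mφ : ℝ := ∫ ω in Set.Icc (-Ω) Ω, ‖φ ω‖ with hMφdef
  have hMφ0 : 0 ≤ Mφ := integral_nonneg fun ω => norm_nonneg _
  have hGb : ∀ z : ℂ, ‖G z‖ ≤ Mφ * Real.exp (Ω * |z.im|) := by
    intro z
    have hbd : ‖∫ ω in Set.Icc (-Ω) Ω, φ ω * Complex.exp (Complex.I * (ω : ℂ) * z)‖
        ≤ ∫ ω in Set.Icc (-Ω) Ω, ‖φ ω‖ * Real.exp (Ω * |z.im|) := by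
      refine norm_integral_le_of_norm_le (hφ1.norm.mul_const _) ?_
      filter_upwards [ae_restrict_mem measurableSet_Icc] with ω hω
      have hωΩ : |ω| ≤ Ω := abs_le.2 ⟨hω.1, hω.2⟩
      simp only [norm_mul, Complex.norm_exp]
      have hrecalc : (Complex.I * (ω : ℂ) * z).re ≤ Ω * |z.im| := by
        calc (Complex.I * (ω : ℂ) * z).re = -(ω * z.im) := by simp [Complex.mul_re]
          _ ≤ |ω * z.im| := neg_le_abs _
          _ = |ω| * |z.im| := abs_mul _ _
          _ ≤ Ω * |z.im| := mul_le_mul_of_nonneg_right hωΩ (abs_nonneg _)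
      exact mul_le_mul_of_nonneg_left (Real.exp_le_exp.2 hrecalc) (norm_nonneg _)
    calc ‖G z‖ ≤ ∫ ω in Set.Icc (-Ω) Ω, ‖φ ω‖ * Real.exp (Ω * |z.im|) := hbd
      _ = Mφ * Real.exp (Ω * |z.im|) := by rw [integral_mul_const]
  have habs : ∀ t : ℝ, |g t| = ‖G (t : ℂ)‖ := by
    intro t
    rw [← hGrep t, Complex.norm_real, Real.norm_eq_abs]
  have hbdd : BddAbove (Set.range fun t : ℝ => |g t|) := by
    refine ⟨Mφ, ?_⟩
    rintro v ⟨t, rfl⟩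
    show |g t| ≤ Mφ
    rw [habs t]
    calc ‖G (t : ℂ)‖ ≤ Mφ * Real.exp (Ω * |(t : ℂ).im|) := hGb _
      _ = Mφ := by simp
  set M : ℝ := ⨆ t : ℝ, |g t| with hMdef
  have hM : ∀ t : ℝ, |g t| ≤ M := fun t => le_ciSup hbdd t
  have hM0 : 0 ≤ M := (abs_nonneg _).trans (hM 0)
  have hGr : ∀ t : ℝ, ‖G (t : ℂ)‖ ≤ M := fun t => (habs t) ▸ hM t
  have hstrip := strip_bound hΩ hGdiff hMφ0 hGb hGr
  rcases Nat.eq_zero_or_pos N with hN | hN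
  · subst hN
    simp only [Function.iterate_zero, id_eq, pow_zero, one_mul]
    exact ciSup_le fun k => hM _
  -- main case N ≥ 1
  set r : ℝ := (N : ℝ) / Ω with hrdef
  have hr : 0 < r := div_pos (by exact_mod_cast hN) hΩ
  have hΩr : Ω * r = (N : ℝ) := by
    rw [hrdef]; field_simp
  have hexp : Real.exp (Ω * r) = Real.exp 1 ^ N := by
    rw [hΩr, show ((N : ℝ)) = (N : ℝ) * 1 by ring, Real.exp_nat_mul]
  set D : ℝ := (Ω * Real.exp 1) ^ N * M with hDdef
  have hderiv : ∀ t : ℝ, ‖iteratedDeriv N G (t : ℂ)‖ ≤ D := by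
    intro t
    have hcirc : ∀ θ : ℝ, ‖G (circleMap (t : ℂ) r θ)‖ ≤ M * Real.exp (Ω * r) := by
      intro θ
      have him : |(circleMap (t : ℂ) r θ).im| ≤ r := by
        have h1 : (circleMap (t : ℂ) r θ).im = r * Real.sin θ := by
          simp [circleMap, Complex.exp_ofReal_mul_I_im]
        rw [h1, abs_mul, _root_.abs_of_nonneg hr.le]
        calc r * |Real.sin θ| ≤ r * 1 :=
              mul_le_mul_of_nonneg_left (abs_le.2 ⟨neg_one_le_sin θ, sin_le_one θ⟩) hr.le
          _ = r := mul_one r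
      calc ‖G (circleMap (t : ℂ) r θ)‖
          ≤ M * Real.exp (Ω * |(circleMap (t : ℂ) r θ).im|) := hstrip _
        _ ≤ M * Real.exp (Ω * r) := by
            apply mul_le_mul_of_nonneg_left _ hM0
            exact Real.exp_le_exp.2 (mul_le_mul_of_nonneg_left him hΩ.le)
    have hC := cauchy_bound hGdiff N (t : ℂ) hr hcirc
    have hfact : (N.factorial : ℝ) ≤ (N : ℝ) ^ N := by
      exact_mod_cast Nat.factorial_le_pow N
    have hNpos : (0 : ℝ) < (N : ℝ) := by exact_mod_cast hN
    calc ‖iteratedDeriv N G (t : ℂ)‖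
        ≤ (N.factorial : ℝ) * (M * Real.exp (Ω * r)) / r ^ N := hC
      _ ≤ (N : ℝ) ^ N * (M * Real.exp (Ω * r)) / r ^ N := by
          gcongr
      _ = D := by
          rw [hexp, hDdef, hrdef]
          rw [div_pow]
          field_simp
          ring
  have hmain := bound_cdiff hT.le N G hGdiff D hderiv
  refine ciSup_le fun k => ?_
  have hsamp := sample_eq T N (fun m : ℤ => g ((m : ℝ) * T)) G
    (fun m => hGrep ((m : ℝ) * T)) k
  have hval : |fdiff^[N] (fun m : ℤ => g ((m : ℝ) * T)) k|
      = ‖(cdiff T)^[N] G ((((k : ℝ) * T : ℝ)) : ℂ)‖ := by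
    rw [← hsamp, Complex.norm_real, Real.norm_eq_abs]
  rw [hval]
  calc ‖(cdiff T)^[N] G ((((k : ℝ) * T : ℝ)) : ℂ)‖ ≤ T ^ N * D := hmain _
    _ = (T * Ω * Real.exp 1) ^ N * M := by
        rw [hDdef, mul_pow, mul_pow, ← mul_assoc]
        ring
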